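/- Let l_d : Matrix(n,n,ℝ) → ℝ be a differentiable function (reduced discrete Lagrangian), N ≥ 2, and (g_0, …, g_N) a sequence of invertible n×n real matrices with W_k = g_k^{-1} g_{k+1}. Then the following are equivalent: (i) for every family of differentiable curves g_k(ε) of invertible matrices with g_k(0) = g_k, with g_0(ε) = g_0 and g_N(ε) = g_N constant, the reduced action sum Σ_{k=0}^{N-1} l_d(g_k(ε)^{-1} g_{k+1}(ε)) has vanishing derivative at ε = 0; (ii) the discrete Euler–Poincaré equations hold: for every k ∈ {1,…,N−1} and every n×n matrix η, D l_d(W_k)[η W_k] − D l_d(W_{k-1})[W_{k-1} η] = 0, where D l_d(W)[·] denotes the Fréchet derivative of l_d at W. -/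

import Mathlib

attribute [local instance]
  Matrix.linftyOpNormedAddCommGroup Matrix.linftyOpNormedRing Matrix.linftyOpNormedAlgebra

open NormedSpace in
private lemma exp_hasDerivAt' {n : ℕ} (η : Matrix (Fin n) (Fin n) ℝ) :
    HasDerivAt (fun ε : ℝ => exp (ε • η)) η 0 := by
  have h := hasDerivAt_exp_smul_const (𝕂 := ℝ) η 0
  simp only [zero_smul, exp_zero, one_mul] at h
  exact h

open NormedSpace in
private lemma exp_isUnit' {n : ℕ} (A : Matrix (Fin n) (Fin n) ℝ) : IsUnit (exp A) := by
  apply isUnit_iff_exists.2 ⟨exp (-A), ?_, ?_⟩ <;>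
  · rw [← Matrix.exp_add_of_commute] <;>
      simp [(Commute.refl A).neg_right, (Commute.refl A).neg_left]

/-- derivative of `ε ↦ (gc ε)⁻¹` at a point where `gc` takes a unit value -/
private lemma hasDerivAt_matinv {n : ℕ} {gc : ℝ → Matrix (Fin n) (Fin n) ℝ}
    {δ : Matrix (Fin n) (Fin n) ℝ} (hd : HasDerivAt gc δ 0) (hu : IsUnit (gc 0)) :
    HasDerivAt (fun ε => (gc ε)⁻¹) (-((gc 0)⁻¹ * δ * (gc 0)⁻¹)) 0 := by
  have hinv : Ring.inverse (gc 0) = (gc 0)⁻¹ := (Matrix.nonsing_inv_eq_ringInverse _).symm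
  have hcoe : (↑hu.unit⁻¹ : Matrix (Fin n) (Fin n) ℝ) = (gc 0)⁻¹ := by
    rw [← hinv]
    exact (Ring.inverse_unit hu.unit).symm.trans (by rw [hu.unit_spec])
  have h1 : HasFDerivAt Ring.inverse
      (-ContinuousLinearMap.mulLeftRight ℝ _ ↑hu.unit⁻¹ ↑hu.unit⁻¹) (gc 0) := by
    simpa [hu.unit_spec] using hasFDerivAt_ringInverse (𝕜 := ℝ) hu.unit
  have h2 := h1.comp_hasDerivAt 0 hd
  simp only [Function.comp_def, ContinuousLinearMap.neg_apply,
    ContinuousLinearMap.mulLeftRight_apply, hcoe] at h2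
  simp only [← Matrix.nonsing_inv_eq_ringInverse] at h2
  exact h2

theorem stmt_9 {n N : ℕ} (hN : 2 ≤ N)
    (ld : Matrix (Fin n) (Fin n) ℝ → ℝ) (hld : Differentiable ℝ ld)
    (g : ℕ → Matrix (Fin n) (Fin n) ℝ) (hg : ∀ k, IsUnit (g k)) :
    (∀ gc : ℕ → ℝ → Matrix (Fin n) (Fin n) ℝ,
      (∀ k, Differentiable ℝ (gc k)) →
      (∀ k ε, IsUnit (gc k ε)) →
      (∀ k, gc k 0 = g k) →
      (∀ ε, gc 0 ε = g 0) →
      (∀ ε, gc N ε = g N) →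
      deriv (fun ε => ∑ k ∈ Finset.range N, ld ((gc k ε)⁻¹ * gc (k + 1) ε)) 0 = 0)
    ↔
    (∀ k : ℕ, 1 ≤ k → k ≤ N - 1 → ∀ η : Matrix (Fin n) (Fin n) ℝ,
      fderiv ℝ ld ((g k)⁻¹ * g (k + 1)) (η * ((g k)⁻¹ * g (k + 1)))
        - fderiv ℝ ld ((g (k - 1))⁻¹ * g k) (((g (k - 1))⁻¹ * g k) * η) = 0) := by
  classical
  open NormedSpace in
  constructor
  · -- criticality ⇒ EP
    intro hcrit k hk1 hk2 η
    have hkN : k < N := by omega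
    set gc : ℕ → ℝ → Matrix (Fin n) (Fin n) ℝ :=
      fun j ε => if j = k then g k * exp (ε • η) else g j with hgc
    have hgck : ∀ ε, gc k ε = g k * exp (ε • η) := by
      intro ε; simp [hgc]
    have hgcne : ∀ j, j ≠ k → ∀ ε, gc j ε = g j := by
      intro j hj ε; simp only [hgc]; rw [if_neg hj]
    have hdiff : ∀ j, Differentiable ℝ (gc j) := by
      intro j
      rcases eq_or_ne j k with h | h
      · have : gc j = fun ε => g k * exp (ε • η) := by subst h; funext ε; exact hgck ε
        rw [this]
        intro t
        exact (((hasDerivAt_exp_smul_const (𝕂 := ℝ) η t).const_mul (g k)).differentiableAt)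
      · have : gc j = fun _ => g j := funext (hgcne j h)
        rw [this]; exact differentiable_const _
    have hunit : ∀ j ε, IsUnit (gc j ε) := by
      intro j ε
      rcases eq_or_ne j k with h | h
      · subst h; rw [hgck]; exact (hg j).mul (exp_isUnit' _)
      · rw [hgcne j h]; exact hg j
    have h0 : ∀ j, gc j 0 = g j := by
      intro j
      rcases eq_or_ne j k with h | h
      · subst h; rw [hgck]; simp
      · exact hgcne j h 0
    have hstart : ∀ ε, gc 0 ε = g 0 := fun ε => hgcne 0 (by omega) ε
    have hend : ∀ ε, gc N ε = g N := fun ε => hgcne N (by omega) ε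
    have key := hcrit gc hdiff hunit h0 hstart hend
    set A : ℝ := fderiv ℝ ld ((g (k - 1))⁻¹ * g k) (((g (k - 1))⁻¹ * g k) * η) with hA
    set B : ℝ := fderiv ℝ ld ((g k)⁻¹ * g (k + 1)) (η * ((g k)⁻¹ * g (k + 1))) with hB
    have hsum : HasDerivAt (fun ε => ∑ j ∈ Finset.range N, ld ((gc j ε)⁻¹ * gc (j + 1) ε))
        (∑ j ∈ Finset.range N,
          ((if j = k - 1 then A else 0) + (if j = k then -B else 0))) 0 := by
      apply HasDerivAt.fun_sum
      intro j _
      rcases eq_or_ne j (k - 1) with hjk1 | hjk1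
      · subst hjk1
        -- term k-1 : ld (W1 * exp (ε • η))
        have e1 : (fun ε : ℝ => ld ((gc (k - 1) ε)⁻¹ * gc (k - 1 + 1) ε))
            = fun ε => ld (((g (k - 1))⁻¹ * g k) * exp (ε • η)) := by
          funext ε
          rw [hgcne (k - 1) (by omega) ε, (by omega : k - 1 + 1 = k), hgck ε, mul_assoc]
        rw [e1, if_pos rfl, if_neg (by omega : ¬ (k - 1 = k)), add_zero]
        have inner : HasDerivAt
            (fun ε : ℝ => ((g (k - 1))⁻¹ * g k) * exp (ε • η))
            (((g (k - 1))⁻¹ * g k) * η) 0 := (exp_hasDerivAt' η).const_mul _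
        have hc := ((hld _).hasFDerivAt).comp_hasDerivAt 0 inner
        simp only [zero_smul, exp_zero, mul_one, Function.comp_def] at hc
        exact hc
      · rcases eq_or_ne j k with hjk | hjk
        · -- term k : ld (exp (ε • (-η)) * W2)
          have e1 : (fun ε : ℝ => ld ((gc j ε)⁻¹ * gc (j + 1) ε))
              = fun ε => ld (exp (ε • (-η)) * ((g k)⁻¹ * g (k + 1))) := by
            funext ε
            rw [hjk, hgck ε, hgcne (k + 1) (by omega) ε, smul_neg,
              Matrix.exp_neg, Matrix.mul_inv_rev, mul_assoc]
          rw [e1, if_pos hjk, if_neg hjk1, zero_add]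
          have inner : HasDerivAt
              (fun ε : ℝ => exp (ε • (-η)) * ((g k)⁻¹ * g (k + 1)))
              ((-η) * ((g k)⁻¹ * g (k + 1))) 0 := (exp_hasDerivAt' (-η)).mul_const _
          have hc := ((hld _).hasFDerivAt).comp_hasDerivAt 0 inner
          simp only [zero_smul, exp_zero, one_mul, Function.comp_def] at hc
          have hval : fderiv ℝ ld ((g k)⁻¹ * g (k + 1)) ((-η) * ((g k)⁻¹ * g (k + 1))) = -B := by
            rw [hB, neg_mul, map_neg]
          exact hval ▸ hc
        · have e1 : (fun ε : ℝ => ld ((gc j ε)⁻¹ * gc (j + 1) ε))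
              = fun _ => ld ((g j)⁻¹ * g (j + 1)) := by
            funext ε
            rw [hgcne j hjk ε, hgcne (j + 1) (by omega) ε]
          rw [e1, if_neg hjk1, if_neg hjk, add_zero]
          exact hasDerivAt_const 0 _
    have hderiv := hsum.deriv
    rw [key] at hderiv
    have hsumval : (∑ j ∈ Finset.range N,
        ((if j = k - 1 then A else 0) + (if j = k then -B else 0))) = A + -B := by
      rw [Finset.sum_add_distrib, Finset.sum_ite_eq' (Finset.range N) (k - 1),
        Finset.sum_ite_eq' (Finset.range N) k]
      simp [Finset.mem_range.2 hkN, Finset.mem_range.2 (by omega : k - 1 < N)]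
    rw [hsumval] at hderiv
    linarith
  · -- EP ⇒ criticality
    intro hEP gc hdiff hunit h0 hstart hend
    set δ : ℕ → Matrix (Fin n) (Fin n) ℝ := fun j => deriv (gc j) 0 with hδ
    set η : ℕ → Matrix (Fin n) (Fin n) ℝ := fun j => (g j)⁻¹ * δ j with hη
    set W : ℕ → Matrix (Fin n) (Fin n) ℝ := fun j => (g j)⁻¹ * g (j + 1) with hW
    have hδ0 : δ 0 = 0 := by
      have h : gc 0 = fun _ => g 0 := funext hstart
      simp only [hδ, h]
      exact deriv_const 0 (g 0)
    have hδN : δ N = 0 := by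
      have h : gc N = fun _ => g N := funext hend
      simp only [hδ, h]
      exact deriv_const 0 (g N)
    have hterm : ∀ j, HasDerivAt (fun ε => ld ((gc j ε)⁻¹ * gc (j + 1) ε))
        (fderiv ℝ ld (W j) (W j * η (j + 1)) - fderiv ℝ ld (W j) (η j * W j)) 0 := by
      intro j
      have hinv : HasDerivAt (fun ε => (gc j ε)⁻¹) (-((g j)⁻¹ * δ j * (g j)⁻¹)) 0 := by
        have := hasDerivAt_matinv ((hdiff j 0).hasDerivAt) (hunit j 0)
        simp only [h0 j] at this
        exact this
      have hmul : HasDerivAt (fun ε => (gc j ε)⁻¹ * gc (j + 1) ε)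
          (-((g j)⁻¹ * δ j * (g j)⁻¹) * g (j + 1) + (g j)⁻¹ * δ (j + 1)) 0 := by
        have := hinv.fun_mul ((hdiff (j + 1) 0).hasDerivAt)
        simp only [h0] at this
        exact this
      have hcomp := ((hld _).hasFDerivAt).comp_hasDerivAt 0 hmul
      have hpt : (gc j 0)⁻¹ * gc (j + 1) 0 = W j := by rw [h0, h0]
      rw [hpt] at hcomp
      have hval : -((g j)⁻¹ * δ j * (g j)⁻¹) * g (j + 1) + (g j)⁻¹ * δ (j + 1)
          = W j * η (j + 1) + -(η j * W j) := by
        have h1 : W j * η (j + 1) = (g j)⁻¹ * δ (j + 1) := by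
          rw [hW, hη]
          simp only
          rw [mul_assoc, ← mul_assoc (g (j + 1)),
            Matrix.mul_nonsing_inv _ ((Matrix.isUnit_iff_isUnit_det _).mp (hg (j + 1))),
            one_mul]
        rw [h1, hη, hW]
        simp only [neg_mul, mul_assoc]
        abel
      rw [hval] at hcomp
      have e : fderiv ℝ ld (W j) (W j * η (j + 1) + -(η j * W j))
          = fderiv ℝ ld (W j) (W j * η (j + 1)) - fderiv ℝ ld (W j) (η j * W j) := by
        rw [sub_eq_add_neg, ← map_neg, ← map_add]
      simp only [Function.comp_def] at hcomp
      exact e ▸ hcomp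
    have hsum : HasDerivAt (fun ε => ∑ j ∈ Finset.range N, ld ((gc j ε)⁻¹ * gc (j + 1) ε))
        (∑ j ∈ Finset.range N,
          (fderiv ℝ ld (W j) (W j * η (j + 1)) - fderiv ℝ ld (W j) (η j * W j))) 0 :=
      HasDerivAt.fun_sum (fun j _ => hterm j)
    rw [hsum.deriv]
    obtain ⟨m, rfl⟩ : ∃ m, N = m + 1 := ⟨N - 1, by omega⟩
    have hηN : η (m + 1) = 0 := by rw [hη]; simp [hδN]
    have hη0 : η 0 = 0 := by rw [hη]; simp [hδ0]
    rw [Finset.sum_sub_distrib, Finset.sum_range_succ, Finset.sum_range_succ']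
    have hu_last : fderiv ℝ ld (W m) (W m * η (m + 1)) = 0 := by
      rw [hηN, mul_zero, map_zero]
    have hw_first : fderiv ℝ ld (W 0) (η 0 * W 0) = 0 := by
      rw [hη0, zero_mul, map_zero]
    rw [hu_last, hw_first, add_zero, add_zero, ← Finset.sum_sub_distrib]
    apply Finset.sum_eq_zero
    intro j hj
    have hj' : j < m := Finset.mem_range.mp hj
    have hEPj := hEP (j + 1) (by omega) (by omega) (η (j + 1))
    simp only [Nat.add_sub_cancel] at hEPj
    have hW' : (g (j + 1))⁻¹ * g (j + 1 + 1) = W (j + 1) := rfl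
    have hW'' : (g j)⁻¹ * g (j + 1) = W j := rfl
    rw [hW', hW''] at hEPj
    linarith
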